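/- Let n have ternary expansion n = a_0 + a_1·3 + ... + a_r·3^r. Then ν_3(T(n)) = 0 if and only if there exists an index i, 0 ≤ i ≤ r, such that a_0 = ... = a_{i−1} = 0 and each of a_{i+1}, ..., a_r is 0 or 2 (a_i arbitrary). -/

import Mathlib

open Nat Finset

/-- The ASM counting sequence `T(n) = ∏_{j=0}^{n-1} (3j+1)!/(n+j)!`. -/
def T (n : ℕ) : ℚ := ∏ j ∈ Finset.range n, ((3 * j + 1)! : ℚ) / ((n + j)! : ℚ)

/-- The Jacobsthal numbers: `J 0 = J 1 = 1`, `J (n+2) = J (n+1) + 2 * J n`. -/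
def J : ℕ → ℕ
  | 0 => 1
  | 1 => 1
  | (n + 2) => J (n + 1) + 2 * J n

/-- Sum of the base-`p` digits of `n`. -/
def S (p n : ℕ) : ℕ := (Nat.digits p n).sum

/-- The generalized sequence `T_p(n) = ∏_{j=0}^{n-1} (pj+1)!/(n+j)!`. -/
def Tp (p n : ℕ) : ℚ := ∏ j ∈ Finset.range n, ((p * j + 1)! : ℚ) / ((n + j)! : ℚ)

/-- Sum of base-3 digits. -/
def sd (m : ℕ) : ℕ := (Nat.digits 3 m).sum

lemma sd_def (m r : ℕ) (hr : r < 3) (h : 0 < 3 * m + r) : sd (3 * m + r) = sd m + r := by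
  unfold sd
  rw [Nat.digits_def' (by norm_num : (1:ℕ) < 3) h]
  have h1 : (3 * m + r) % 3 = r := by omega
  have h2 : (3 * m + r) / 3 = m := by omega
  rw [h1, h2, List.sum_cons]
  omega

lemma sd_mul3 (m : ℕ) : sd (3 * m) = sd m := by
  rcases Nat.eq_zero_or_pos m with rfl | hm
  · rfl
  · have := sd_def m 0 (by norm_num) (by omega)
    simpa using this

def Aa (n : ℕ) : ℤ := ∑ m ∈ Finset.range n, (sd m : ℤ)

lemma Aa_succ (n : ℕ) : Aa (n + 1) = Aa n + sd n := Finset.sum_range_succ _ _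

lemma Aa_three (m : ℕ) : Aa (3 * m) = 3 * Aa m + 3 * m := by
  induction m with
  | zero => simp [Aa]
  | succ k ih =>
    have e : 3 * (k + 1) = (3 * k) + 1 + 1 + 1 := by ring
    have s1 : sd (3 * k + 1) = sd k + 1 := sd_def k 1 (by norm_num) (by omega)
    have s2 : sd (3 * k + 1 + 1) = sd k + 2 := by
      have := sd_def k 2 (by norm_num) (by omega)
      rw [show 3 * k + 1 + 1 = 3 * k + 2 by ring]; exact this
    rw [e, Aa_succ, Aa_succ, Aa_succ, ih, sd_mul3, s1, s2, Aa_succ]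
    push_cast; ring

def Ff (n : ℕ) : ℤ := Aa (2 * n) - 2 * Aa n - n
def Dd (m : ℕ) : ℤ := (sd (2 * m) : ℤ) - sd m
def Gg (m : ℕ) : ℤ := (sd (2 * m + 1) : ℤ) - sd m - 1

lemma sd1 (m : ℕ) : sd (3 * m + 1) = sd m + 1 := sd_def m 1 (by norm_num) (by omega)
lemma sd2 (m : ℕ) : sd (3 * m + 2) = sd m + 2 := sd_def m 2 (by norm_num) (by omega)

lemma Ff_zero : Ff 0 = 0 := by simp [Ff, Aa]
lemma Dd_zero : Dd 0 = 0 := by simp [Dd]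
lemma sd_zero : sd 0 = 0 := by simp [sd]
lemma sd_one : sd 1 = 1 := by have := sd1 0; simpa [sd_zero] using this
lemma Gg_zero : Gg 0 = 0 := by simp [Gg, sd_one, sd_zero]

lemma Aa_1 (m : ℕ) : Aa (3 * m + 1) = 3 * Aa m + 3 * m + sd m := by
  rw [Aa_succ, Aa_three, sd_mul3]

lemma Aa_2 (m : ℕ) : Aa (3 * m + 2) = 3 * Aa m + 3 * m + 2 * sd m + 1 := by
  rw [show 3 * m + 2 = 3 * m + 1 + 1 by ring, Aa_succ, Aa_1, sd1]
  push_cast; ring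

lemma Ff_0 (m : ℕ) : Ff (3 * m) = 3 * Ff m := by
  unfold Ff
  rw [show 2 * (3 * m) = 3 * (2 * m) by ring, Aa_three, Aa_three]
  push_cast; ring

lemma Ff_1 (m : ℕ) : Ff (3 * m + 1) = 3 * Ff m + 2 * Dd m := by
  unfold Ff Dd
  rw [show 2 * (3 * m + 1) = 3 * (2 * m) + 2 by ring, Aa_2, Aa_1]
  push_cast; ring

lemma Ff_2 (m : ℕ) : Ff (3 * m + 2) = 3 * Ff m + 3 * Dd m + Gg m := by
  unfold Ff Dd Gg
  rw [show 2 * (3 * m + 2) = 3 * (2 * m + 1) + 1 by ring, Aa_1, Aa_succ, Aa_2]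
  push_cast; ring

lemma Dd_0 (m : ℕ) : Dd (3 * m) = Dd m := by
  unfold Dd
  rw [show 2 * (3 * m) = 3 * (2 * m) by ring, sd_mul3, sd_mul3]

lemma Dd_1 (m : ℕ) : Dd (3 * m + 1) = Dd m + 1 := by
  unfold Dd
  rw [show 2 * (3 * m + 1) = 3 * (2 * m) + 2 by ring, sd2, sd1]
  push_cast; ring

lemma Dd_2 (m : ℕ) : Dd (3 * m + 2) = Gg m := by
  unfold Dd Gg
  rw [show 2 * (3 * m + 2) = 3 * (2 * m + 1) + 1 by ring, sd1, sd2]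
  push_cast; ring

lemma Gg_0 (m : ℕ) : Gg (3 * m) = Dd m := by
  unfold Gg Dd
  rw [show 2 * (3 * m) + 1 = 3 * (2 * m) + 1 by ring, sd1, sd_mul3]
  push_cast; ring

lemma Gg_1 (m : ℕ) : Gg (3 * m + 1) = Gg m - 1 := by
  unfold Gg
  rw [show 2 * (3 * m + 1) + 1 = 3 * (2 * m + 1) by ring, sd_mul3, sd1]
  push_cast; ring

lemma Gg_2 (m : ℕ) : Gg (3 * m + 2) = Gg m := by
  unfold Gg
  rw [show 2 * (3 * m + 2) + 1 = 3 * (2 * m + 1) + 2 by ring, sd2, sd2]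
  push_cast; ring

def Qq (m : ℕ) : Prop := ∀ d ∈ Nat.digits 3 m, d = 0 ∨ d = 2

lemma Qq_zero : Qq 0 := by intro d hd; simp at hd

lemma digits_eq (m r : ℕ) (hr : r < 3) (h : 0 < 3 * m + r) :
    Nat.digits 3 (3 * m + r) = r :: Nat.digits 3 m := by
  rw [Nat.digits_def' (by norm_num : (1:ℕ) < 3) h]
  have h1 : (3 * m + r) % 3 = r := by omega
  have h2 : (3 * m + r) / 3 = m := by omega
  rw [h1, h2]

lemma Qq_0 (m : ℕ) : Qq (3 * m) ↔ Qq m := by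
  rcases Nat.eq_zero_or_pos m with rfl | hm
  · simp
  · unfold Qq
    rw [show 3 * m = 3 * m + 0 by ring, digits_eq m 0 (by norm_num) (by omega)]
    simp

lemma Qq_1 (m : ℕ) : ¬ Qq (3 * m + 1) := by
  unfold Qq
  rw [digits_eq m 1 (by norm_num) (by omega)]
  intro h
  rcases h 1 (by simp) with h1 | h1 <;> omega

lemma Qq_2 (m : ℕ) : Qq (3 * m + 2) ↔ Qq m := by
  unfold Qq
  rw [digits_eq m 2 (by norm_num) (by omega)]
  simp

lemma inv (m : ℕ) : 0 ≤ Ff m ∧ 0 ≤ Ff m + 2 * Dd m ∧ 0 ≤ Ff m + Dd m + Gg m ∧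
    (Qq m → Ff m = 0 ∧ Dd m = 0 ∧ Gg m = 0) ∧
    (¬ Qq m → 2 ≤ 3 * Ff m + 2 * Dd m ∧ 2 ≤ 3 * Ff m + 3 * Dd m + Gg m) := by
  induction m using Nat.strong_induction_on with
  | _ m ih =>
  rcases Nat.eq_zero_or_pos m with rfl | hm
  · refine ⟨?_, ?_, ?_, ?_, ?_⟩ <;>
      simp [Ff_zero, Dd_zero, Gg_zero, Qq_zero]
  · have hq : m / 3 < m := Nat.div_lt_self hm (by norm_num)
    obtain ⟨hF, hFD, hFDG, hQ, hNQ⟩ := ih (m / 3) hq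
    set q := m / 3 with hqdef
    have hm3 : m = 3 * q + m % 3 := by omega
    have hr : m % 3 < 3 := Nat.mod_lt _ (by norm_num)
    interval_cases h : m % 3
    · -- r = 0
      have e : m = 3 * q := by omega
      rw [e] at *
      rw [Ff_0, Dd_0, Gg_0, Qq_0]
      by_cases hQq : Qq q
      · obtain ⟨h1, h2, h3⟩ := hQ hQq
        refine ⟨by linarith, by linarith, by linarith, fun _ => ⟨by linarith, by linarith, by linarith⟩, fun h => absurd hQq h⟩
      · obtain ⟨h1, h2⟩ := hNQ hQq
        refine ⟨by linarith, by linarith, by linarith, fun h => absurd h hQq, fun _ => ⟨by linarith, by linarith⟩⟩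
    · -- r = 1
      have e : m = 3 * q + 1 := by omega
      rw [e] at *
      rw [Ff_1, Dd_1, Gg_1]
      by_cases hQq : Qq q
      · obtain ⟨h1, h2, h3⟩ := hQ hQq
        refine ⟨by linarith, by linarith, by linarith, fun h => absurd h (Qq_1 q), fun _ => ⟨by linarith, by linarith⟩⟩
      · obtain ⟨h1, h2⟩ := hNQ hQq
        refine ⟨by linarith, by linarith, by linarith, fun h => absurd h (Qq_1 q), fun _ => ⟨by linarith, by linarith⟩⟩
    · -- r = 2
      have e : m = 3 * q + 2 := by omega
      rw [e] at *
      rw [Ff_2, Dd_2, Gg_2, Qq_2]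
      by_cases hQq : Qq q
      · obtain ⟨h1, h2, h3⟩ := hQ hQq
        refine ⟨by linarith, by linarith, by linarith, fun _ => ⟨by linarith, by linarith, by linarith⟩, fun h => absurd hQq h⟩
      · obtain ⟨h1, h2⟩ := hNQ hQq
        refine ⟨by linarith, by linarith, by linarith, fun h => absurd h hQq, fun _ => ⟨by linarith, by linarith⟩⟩

def Pl (L : List ℕ) : Prop :=
  ∃ i < L.length, (∀ k < i, L.getD k 0 = 0) ∧
    (∀ k, i < k → k < L.length → L.getD k 0 = 0 ∨ L.getD k 0 = 2)

lemma all02_iff (L : List ℕ) :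
    (∀ d ∈ L, d = 0 ∨ d = 2) ↔ ∀ k, k < L.length → L.getD k 0 = 0 ∨ L.getD k 0 = 2 := by
  constructor
  · intro h k hk
    rw [List.getD_eq_getElem L 0 hk]
    exact h _ (L.getElem_mem hk)
  · intro h d hd
    obtain ⟨k, hk, rfl⟩ := List.mem_iff_getElem.mp hd
    have := h k hk
    rwa [List.getD_eq_getElem L 0 hk] at this

lemma Pl_cons1 (L : List ℕ) : Pl (1 :: L) ↔ ∀ d ∈ L, d = 0 ∨ d = 2 := by
  rw [all02_iff]
  constructor
  · rintro ⟨i, hi, h0, h2⟩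
    match i with
    | 0 =>
      intro k hk
      have := h2 (k + 1) (Nat.succ_pos k) (by simpa using Nat.succ_lt_succ hk)
      simpa using this
    | j + 1 =>
      have := h0 0 (Nat.succ_pos j)
      simp at this
  · intro h
    refine ⟨0, by simp, by omega, ?_⟩
    intro k hk hk2
    match k with
    | j + 1 =>
      have := h j (by simpa using Nat.lt_of_succ_lt_succ hk2)
      simpa using this

lemma Pl_cons2 (L : List ℕ) : Pl (2 :: L) ↔ ∀ d ∈ L, d = 0 ∨ d = 2 := by
  rw [all02_iff]
  constructor
  · rintro ⟨i, hi, h0, h2⟩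
    match i with
    | 0 =>
      intro k hk
      have := h2 (k + 1) (Nat.succ_pos k) (by simpa using Nat.succ_lt_succ hk)
      simpa using this
    | j + 1 =>
      have := h0 0 (Nat.succ_pos j)
      simp at this
  · intro h
    refine ⟨0, by simp, by omega, ?_⟩
    intro k hk hk2
    match k with
    | j + 1 =>
      have := h j (by simpa using Nat.lt_of_succ_lt_succ hk2)
      simpa using this

lemma Pl_cons0 (L : List ℕ) (hL : L ≠ []) : Pl (0 :: L) ↔ Pl L := by
  constructor
  · rintro ⟨i, hi, h0, h2⟩
    match i with
    | 0 =>
      -- all of L is 0 or 2; take witness 0 for L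
      have hlen : 0 < L.length := List.length_pos_iff.mpr hL
      refine ⟨0, hlen, by omega, ?_⟩
      intro k hk hk2
      have := h2 (k + 1) (Nat.succ_pos k) (by simpa using Nat.succ_lt_succ hk2)
      simpa using this
    | j + 1 =>
      refine ⟨j, by simpa using Nat.lt_of_succ_lt_succ hi, ?_, ?_⟩
      · intro k hk
        have := h0 (k + 1) (Nat.succ_lt_succ hk)
        simpa using this
      · intro k hk hk2
        have := h2 (k + 1) (Nat.succ_lt_succ hk) (by simpa using Nat.succ_lt_succ hk2)
        simpa using this
  · rintro ⟨i, hi, h0, h2⟩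
    refine ⟨i + 1, by simpa using Nat.succ_lt_succ hi, ?_, ?_⟩
    · intro k hk
      match k with
      | 0 => simp
      | j + 1 =>
        have := h0 j (Nat.lt_of_succ_lt_succ hk)
        simpa using this
    · intro k hk hk2
      match k with
      | j + 1 =>
        have := h2 j (Nat.lt_of_succ_lt_succ hk) (by simpa using Nat.lt_of_succ_lt_succ hk2)
        simpa using this

lemma Ff_zero_iff (n : ℕ) (hn : 0 < n) : Ff n = 0 ↔ Pl (Nat.digits 3 n) := by
  induction n using Nat.strong_induction_on with
  | _ n ih =>
  have hq' : n / 3 < n := Nat.div_lt_self hn (by norm_num)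
  set q := n / 3 with hqdef
  have hr : n % 3 < 3 := Nat.mod_lt _ (by norm_num)
  interval_cases h : n % 3
  · -- n = 3q, q > 0
    have e : n = 3 * q := by omega
    have hqpos : 0 < q := by omega
    rw [e, Ff_0, show 3 * q = 3 * q + 0 by ring, digits_eq q 0 (by norm_num) (by omega),
      Pl_cons0 _ (Nat.digits_ne_nil_iff_ne_zero.mpr (by omega))]
    rw [← ih q (by omega) hqpos]
    omega
  · -- n = 3q + 1
    have e : n = 3 * q + 1 := by omega
    rw [e, Ff_1, digits_eq q 1 (by norm_num) (by omega), Pl_cons1]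
    obtain ⟨hF, hFD, hFDG, hQ, hNQ⟩ := inv q
    by_cases hQq : Qq q
    · obtain ⟨h1, h2, h3⟩ := hQ hQq
      simp only [h1, h2]
      exact ⟨fun _ => hQq, fun _ => by ring⟩
    · obtain ⟨h1, h2⟩ := hNQ hQq
      constructor
      · intro h0; exfalso; omega
      · intro hall; exact absurd hall hQq
  · -- n = 3q + 2
    have e : n = 3 * q + 2 := by omega
    rw [e, Ff_2, digits_eq q 2 (by norm_num) (by omega), Pl_cons2]
    obtain ⟨hF, hFD, hFDG, hQ, hNQ⟩ := inv q
    by_cases hQq : Qq q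
    · obtain ⟨h1, h2, h3⟩ := hQ hQq
      simp only [h1, h2, h3]
      exact ⟨fun _ => hQq, fun _ => by ring⟩
    · obtain ⟨h1, h2⟩ := hNQ hQq
      constructor
      · intro h0; exfalso; omega
      · intro hall; exact absurd hall hQq

instance fact3 : Fact (Nat.Prime 3) := ⟨by norm_num⟩

lemma padicValRat_prod {ι : Type*} [DecidableEq ι] (s : Finset ι) (f : ι → ℚ)
    (hf : ∀ i ∈ s, f i ≠ 0) :
    padicValRat 3 (∏ i ∈ s, f i) = ∑ i ∈ s, padicValRat 3 (f i) := by
  induction s using Finset.induction with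
  | empty => simp
  | @insert a s' hx ih =>
    rw [Finset.prod_insert hx, Finset.sum_insert hx,
      padicValRat.mul (hf a (Finset.mem_insert_self a s'))
        (Finset.prod_ne_zero_iff.mpr fun i hi => hf i (Finset.mem_insert_of_mem hi)),
      ih fun i hi => hf i (Finset.mem_insert_of_mem hi)]

lemma legendre3 (m : ℕ) : 2 * (padicValNat 3 (m !) : ℤ) = (m : ℤ) - sd m := by
  have h := sub_one_mul_padicValNat_factorial (p := 3) m
  have hle : (Nat.digits 3 m).sum ≤ m := Nat.digit_sum_le 3 m
  rw [sd]
  omega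

lemma val_T (n : ℕ) (hn : 0 < n) : 2 * padicValRat 3 (T n) = Ff n := by
  have hfac : ∀ m : ℕ, ((m ! : ℕ) : ℚ) ≠ 0 := fun m =>
    Nat.cast_ne_zero.mpr (Nat.factorial_ne_zero m)
  have h1 : padicValRat 3 (T n) =
      ∑ j ∈ Finset.range n, ((padicValNat 3 ((3 * j + 1)!) : ℤ) - padicValNat 3 ((n + j)!)) := by
    rw [T, padicValRat_prod _ _ fun j _ => div_ne_zero (hfac _) (hfac _)]
    refine Finset.sum_congr rfl fun j _ => ?_
    rw [padicValRat.div (hfac _) (hfac _), padicValRat.of_nat, padicValRat.of_nat]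
  rw [h1, Finset.mul_sum]
  have h2 : ∀ j ∈ Finset.range n,
      2 * ((padicValNat 3 ((3 * j + 1)!) : ℤ) - padicValNat 3 ((n + j)!)) =
      (((sd (n + j) : ℤ) - sd j - 1) + (2 * (j : ℤ) + 1 - n)) := by
    intro j _
    have l1 := legendre3 (3 * j + 1)
    have l2 := legendre3 (n + j)
    rw [sd1] at l1
    push_cast at l1 l2 ⊢
    linarith
  rw [Finset.sum_congr rfl h2, Finset.sum_add_distrib]
  have h3 : ∑ j ∈ Finset.range n, (2 * (j : ℤ) + 1 - n) = 0 := by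
    have key : ∀ m : ℕ, (∑ j ∈ Finset.range m, (2 * (j : ℤ) + 1)) = m * m := by
      intro m
      induction m with
      | zero => simp
      | succ k ih => rw [Finset.sum_range_succ, ih]; push_cast; ring
    rw [Finset.sum_sub_distrib, key, Finset.sum_const, Finset.card_range]
    simp [mul_comm]
  have h4 : ∑ j ∈ Finset.range n, ((sd (n + j) : ℤ) - sd j - 1) = Ff n := by
    have e1 : ∑ j ∈ Finset.range n, ((sd (n + j) : ℤ)) = Aa (2 * n) - Aa n := by
      have split : Aa n + ∑ m ∈ Finset.Ico n (2 * n), (sd m : ℤ) = Aa (2 * n) := by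
        rw [Aa, Aa, Finset.range_eq_Ico, Finset.range_eq_Ico]
        exact Finset.sum_Ico_consecutive (m := 0) (n := n) (k := 2 * n) (fun m => (sd m : ℤ)) (by omega) (by omega)
      have e2 : ∑ m ∈ Finset.Ico n (2 * n), (sd m : ℤ) =
          ∑ j ∈ Finset.range n, ((sd (n + j) : ℤ)) := by
        rw [Finset.sum_Ico_eq_sum_range, show 2 * n - n = n by omega]
      linarith [split, e2]
    have eA : ∑ j ∈ Finset.range n, (sd j : ℤ) = Aa n := rfl
    rw [Finset.sum_sub_distrib, Finset.sum_sub_distrib, e1, Finset.sum_const, Finset.card_range,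
      eA, Ff]
    ring
  rw [h3, h4]
  ring

theorem stmt18 (n : ℕ) (hn : 0 < n) :
    padicValRat 3 (T n) = 0 ↔
      ∃ i < (Nat.digits 3 n).length,
        (∀ k < i, (Nat.digits 3 n).getD k 0 = 0) ∧
        (∀ k, i < k → k < (Nat.digits 3 n).length →
          (Nat.digits 3 n).getD k 0 = 0 ∨ (Nat.digits 3 n).getD k 0 = 2) := by
  have h := val_T n hn
  have hiff := Ff_zero_iff n hn
  constructor
  · intro h0
    have hF : Ff n = 0 := by rw [← h, h0]; ring
    exact hiff.mp hF
  · intro hp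
    have hF : Ff n = 0 := hiff.mpr hp
    omega
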